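/- Let G be a diamond-free graph containing an induced 5-cycle v1v2v3v4v5, with F_i the set of vertices outside the cycle adjacent on the cycle exactly to v_i, v_{i-2}, v_{i+2}, and A_j the vertices adjacent only to v_j. Then F_i is anti-complete to A_{i+2} ∪ A_{i+3} (indices mod 5). -/

import Mathlib

open SimpleGraph

def diamond : SimpleGraph (Fin 4) := (⊤ : SimpleGraph (Fin 4)).deleteEdges {s(0, 1)}

lemma no_diamond_aux {V : Type*} (G : SimpleGraph V)
    (hD : ¬ Nonempty (diamond ↪g G)) (a b c d : V)
    (hab : ¬ G.Adj a b) (hne : a ≠ b)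
    (hac : G.Adj a c) (had : G.Adj a d) (hbc : G.Adj b c) (hbd : G.Adj b d)
    (hcd : G.Adj c d) : False := by
  have nac := G.ne_of_adj hac
  have nad := G.ne_of_adj had
  have nbc := G.ne_of_adj hbc
  have nbd := G.ne_of_adj hbd
  have ncd := G.ne_of_adj hcd
  apply hD
  refine ⟨⟨⟨![a, b, c, d], ?_⟩, ?_⟩⟩
  · intro x y h
    fin_cases x <;> fin_cases y <;> simp_all <;> first | rfl | (exfalso; simp_all)
  · intro x y
    fin_cases x <;> fin_cases y <;>
      simp_all [diamond, SimpleGraph.deleteEdges, Sym2.eq, Sym2.rel_iff'] <;>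
      first
        | exact hab
        | exact fun h => hab (G.adj_symm h)
        | (exact hac.symm) | (exact had.symm) | (exact hbc.symm) | (exact hbd.symm)
        | (exact hcd.symm)
        | (exact hac) | (exact had) | (exact hbc) | (exact hbd) | (exact hcd)

theorem stmt_13 {V : Type*} (G : SimpleGraph V)
    (hD : ¬ Nonempty (diamond ↪g G))
    (v : Fin 5 → V) (hv : Function.Injective v)
    (hC5 : ∀ i j, G.Adj (v i) (v j) ↔ j = i + 1 ∨ i = j + 1)
    (A : Fin 5 → Set V)
    (hA : ∀ i, A i = {u | u ∉ Set.range v ∧ ∀ j, G.Adj u (v j) ↔ j = i})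
    (F : Fin 5 → Set V)
    (hF : ∀ i, F i = {u | u ∉ Set.range v ∧ ∀ j, G.Adj u (v j) ↔ (j = i ∨ j = i - 2 ∨ j = i + 2)}) :
    ∀ i, ∀ f ∈ F i, ∀ a ∈ A (i + 2) ∪ A (i + 3), ¬ G.Adj f a := by
  have key : ∀ i : Fin 5, i - 2 = i + 3 ∧ (i+3) ≠ (i+2) ∧ (i+2) ≠ (i+3) ∧
      ((i+2 : Fin 5) = i+3+1 ∨ (i+3) = i+2+1) := by decide
  intro i f hf a ha hadj
  rw [hF] at hf
  obtain ⟨hf1, hf2⟩ := hf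
  have fadj : ∀ j, G.Adj f (v j) ↔ (j = i ∨ j = i - 2 ∨ j = i + 2) := hf2
  obtain ⟨k1, k2, k3, k4⟩ := key i
  have f2 : G.Adj f (v (i+2)) := (fadj _).2 (Or.inr (Or.inr rfl))
  have f3 : G.Adj f (v (i+3)) := (fadj _).2 (Or.inr (Or.inl (k1 ▸ rfl)))
  have v23 : G.Adj (v (i+3)) (v (i+2)) := (hC5 _ _).2 (by tauto)
  cases ha with
  | inl h =>
    rw [hA] at h
    obtain ⟨ha1, ha2⟩ := h
    -- a adjacent only to v (i+2); nonedge a -- v(i+3)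
    exact no_diamond_aux G hD a (v (i+3)) f (v (i+2))
      (fun h => k2 ((ha2 _).1 h))
      (fun h => ha1 ⟨i+3, h.symm⟩)
      hadj.symm ((ha2 _).2 rfl) f3.symm v23 f2
  | inr h =>
    rw [hA] at h
    obtain ⟨ha1, ha2⟩ := h
    -- a adjacent only to v (i+3); nonedge a -- v(i+2)
    exact no_diamond_aux G hD a (v (i+2)) f (v (i+3))
      (fun h => k3 ((ha2 _).1 h))
      (fun h => ha1 ⟨i+2, h.symm⟩)
      hadj.symm ((ha2 _).2 rfl) f2.symm v23.symm f3
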